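/- Let K be a field and A a 2×2 matrix over K. Define the K-linear endomorphism Φ of K² ⊗ K² by Φ(v ⊗ w) = (A·w) ⊗ v on pure tensors. Then the characteristic polynomial of Φ equals (X² − (trace A)·X + det A)·(X² − det A). -/

import Mathlib

open scoped TensorProduct

/-- The characteristic polynomial of the "inert Frobenius" `Φ(v ⊗ w) = (A·w) ⊗ v` on
`K² ⊗ K²` is `(X² − (tr A)X + det A)(X² − det A)`. -/
theorem stmt_2 (K : Type*) [Field K] (A : Matrix (Fin 2) (Fin 2) K)
    (Φ : (Fin 2 → K) ⊗[K] (Fin 2 → K) →ₗ[K] (Fin 2 → K) ⊗[K] (Fin 2 → K))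
    (hΦ : ∀ v w : Fin 2 → K, Φ (v ⊗ₜ[K] w) = (A.mulVec w) ⊗ₜ[K] v) :
    LinearMap.charpoly Φ =
      (Polynomial.X ^ 2 - Polynomial.C A.trace * Polynomial.X + Polynomial.C A.det) *
        (Polynomial.X ^ 2 - Polynomial.C A.det) := by
  classical
  set e := Pi.basisFun K (Fin 2)
  set b := Module.Basis.tensorProduct e e with hb
  rw [← LinearMap.charpoly_toMatrix Φ b]
  set M := LinearMap.toMatrix b b Φ with hM
  have hMe : ∀ p q i j, M (p, q) (i, j) = A p j * (if q = i then 1 else 0) := by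
    intro p q i j
    rw [hM, LinearMap.toMatrix_apply, hb, Module.Basis.tensorProduct_apply,
      Pi.basisFun_apply, Pi.basisFun_apply, hΦ, Module.Basis.tensorProduct_repr_tmul_apply]
    simp [e, Matrix.mulVec, dotProduct, Pi.single_apply, mul_comm, eq_comm]
  let q : Fin 2 × Fin 2 ≃ Fin 4 :=
    { toFun := fun p => ⟨2 * p.1.val + p.2.val, by omega⟩
      invFun := ![(0, 0), (0, 1), (1, 0), (1, 1)]
      left_inv := by decide
      right_inv := by decide }
  rw [← Matrix.charpoly_reindex q M]
  have hR : Matrix.reindex q q M =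
      !![A 0 0, A 0 1, 0, 0;
         0, 0, A 0 0, A 0 1;
         A 1 0, A 1 1, 0, 0;
         0, 0, A 1 0, A 1 1] := by
    ext i j
    rw [Matrix.reindex_apply, Matrix.submatrix_apply]
    fin_cases i <;> fin_cases j <;> simp [q, hMe, Fin.ext_iff]
  rw [hR, Matrix.charpoly]
  have hc : Matrix.charmatrix
      (!![A 0 0, A 0 1, 0, 0;
         0, 0, A 0 0, A 0 1;
         A 1 0, A 1 1, 0, 0;
         0, 0, A 1 0, A 1 1] : Matrix (Fin 4) (Fin 4) K) =
      !![Polynomial.X - Polynomial.C (A 0 0), -Polynomial.C (A 0 1), 0, 0;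
         0, Polynomial.X, -Polynomial.C (A 0 0), -Polynomial.C (A 0 1);
         -Polynomial.C (A 1 0), -Polynomial.C (A 1 1), Polynomial.X, 0;
         0, 0, -Polynomial.C (A 1 0), Polynomial.X - Polynomial.C (A 1 1)] := by
    ext i j
    fin_cases i <;> fin_cases j <;>
      simp [Matrix.charmatrix_apply, Matrix.one_apply]
  rw [hc, Matrix.trace_fin_two, Matrix.det_fin_two]
  simp [Matrix.det_succ_row_zero, Fin.sum_univ_succ, Fin.succAbove]
  ring
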